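/- arXiv:1910.05777 — 2 statements merged into one kernel-verified Lean document; each statement's English description precedes it below -/
import Mathlib

section
/- Let γ be a Lipschitz graph over [a,b] (graph of an L-Lipschitz function). Let μ be a nonnegative measure with total mass β < 1 supported on an open set U in ℂ containing γ, and define φ(z) = ∫ log|z − ζ| dμ(ζ). Then ∫_γ e^{-φ} ds ≤ C, where C > 0 is a constant depending only on L, β, a, b. -/
open MeasureTheory Set Metric Complex Filter
open scoped ENNReal Topology

/-- The point `t + i y(t)` of the graph of `y : ℝ → ℝ`. -/
noncomputable def graphPt (y : ℝ → ℝ) (t : ℝ) : ℂ := (t : ℂ) + (y t : ℂ) * Complex.I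

/-- The arc length element `√(1 + y'(t)²)` of the graph of `y`. -/
noncomputable def arcElt (y : ℝ → ℝ) (t : ℝ) : ℝ := Real.sqrt (1 + deriv y t ^ 2)

lemma expJensen {ν : Measure ℂ} [IsProbabilityMeasure ν] {g : ℂ → ℝ} (hg : Integrable g ν) :
    ENNReal.ofReal (Real.exp (∫ x, g x ∂ν)) ≤ ∫⁻ x, ENNReal.ofReal (Real.exp (g x)) ∂ν := by
  by_cases htop : ∫⁻ x, ENNReal.ofReal (Real.exp (g x)) ∂ν = ⊤
  · simp [htop]
  have hint : Integrable (fun x => Real.exp (g x)) ν := by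
    refine ⟨(Real.continuous_exp.comp_aestronglyMeasurable hg.1), ?_⟩
    rw [hasFiniteIntegral_iff_ofReal (Eventually.of_forall fun x => (Real.exp_pos _).le)]
    exact lt_top_iff_ne_top.2 htop
  have hj : Real.exp (∫ x, g x ∂ν) ≤ ∫ x, Real.exp (g x) ∂ν := by
    have := convexOn_exp.map_integral_le Real.continuous_exp.continuousOn isClosed_univ
      (Eventually.of_forall fun x => mem_univ _) hg (by exact hint)
    simpa using this
  calc ENNReal.ofReal (Real.exp (∫ x, g x ∂ν)) ≤ ENNReal.ofReal (∫ x, Real.exp (g x) ∂ν) :=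
        ENNReal.ofReal_le_ofReal hj
    _ = ∫⁻ x, ENNReal.ofReal (Real.exp (g x)) ∂ν :=
        ofReal_integral_eq_lintegral_ofReal hint (Eventually.of_forall fun x => (Real.exp_pos _).le)

lemma halfInt {β : ℝ} (hβ0 : 0 < β) (hβ1 : β < 1) :
    ∫⁻ s in Icc (0:ℝ) 1, ENNReal.ofReal (Real.exp (-β * Real.log |s|))
      ≤ ENNReal.ofReal (1/(1-β)) := by
  have h1β : 0 < 1 - β := by linarith
  have hcong : ∀ᵐ s ∂(volume.restrict (Icc (0:ℝ) 1)),
      ENNReal.ofReal (Real.exp (-β * Real.log |s|)) = ENNReal.ofReal (s ^ (-β)) := by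
    have hmem := ae_restrict_mem (μ := volume) (measurableSet_Icc (a := (0:ℝ)) (b := 1))
    have h0 : ∀ᵐ s ∂(volume.restrict (Icc (0:ℝ) 1)), s ≠ 0 := by
      refine ae_restrict_of_ae ?_
      have : (volume : Measure ℝ) {(0:ℝ)} = 0 := Real.volume_singleton
      filter_upwards [measure_eq_zero_iff_ae_notMem.mp this] with s hs using hs
    filter_upwards [hmem, h0] with s hs hs0
    have hpos : 0 < s := lt_of_le_of_ne hs.1 (Ne.symm hs0)
    rw [abs_of_pos hpos, Real.rpow_def_of_pos hpos, mul_comm]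
  rw [lintegral_congr_ae hcong]
  have hii : IntervalIntegrable (fun x : ℝ => x ^ (-β)) volume 0 1 :=
    intervalIntegral.intervalIntegrable_rpow' (by linarith)
  have hInt : IntegrableOn (fun x : ℝ => x ^ (-β)) (Icc (0:ℝ) 1) volume := by
    rw [integrableOn_Icc_iff_integrableOn_Ioc]
    simpa [intervalIntegrable_iff, uIoc_of_le (zero_le_one (α := ℝ))] using hii
  have hnn : 0 ≤ᵐ[volume.restrict (Icc (0:ℝ) 1)] fun x : ℝ => x ^ (-β) := by
    filter_upwards [ae_restrict_mem (μ := volume) (measurableSet_Icc (a := (0:ℝ)) (b := 1))] with s hs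
    exact Real.rpow_nonneg hs.1 _
  rw [← ofReal_integral_eq_lintegral_ofReal hInt hnn]
  apply ENNReal.ofReal_le_ofReal
  have hval : ∫ x in Icc (0:ℝ) 1, x ^ (-β) = 1 / (1 - β) := by
    rw [integral_Icc_eq_integral_Ioc, ← intervalIntegral.integral_of_le (zero_le_one (α := ℝ)),
      integral_rpow (Or.inl (by linarith))]
    rw [Real.one_rpow, Real.zero_rpow (by linarith)]
    rw [show -β + 1 = 1 - β from by ring]
    norm_num
  rw [hval]

lemma measF {β : ℝ} : Measurable (fun s : ℝ => ENNReal.ofReal (Real.exp (-β * Real.log |s|))) :=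
  ENNReal.measurable_ofReal.comp (Real.measurable_exp.comp
    ((measurable_const.mul (Real.measurable_log.comp measurable_abs))))

lemma reflInt {β : ℝ} :
    ∫⁻ s in Icc (-1:ℝ) 0, ENNReal.ofReal (Real.exp (-β * Real.log |s|))
      = ∫⁻ s in Icc (0:ℝ) 1, ENNReal.ofReal (Real.exp (-β * Real.log |s|)) := by
  have hpre : (fun s : ℝ => -s) ⁻¹' (Icc (-1:ℝ) 0) = Icc (0:ℝ) 1 := by
    ext s; simp only [mem_preimage, mem_Icc]
    constructor <;> (intro h; constructor <;> linarith [h.1, h.2])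
  have hmp : MeasurePreserving (fun s : ℝ => -s) (volume.restrict (Icc (0:ℝ) 1))
      (volume.restrict (Icc (-1:ℝ) 0)) := by
    have := (Measure.measurePreserving_neg (volume : Measure ℝ)).restrict_preimage
      (measurableSet_Icc (a := (-1:ℝ)) (b := 0))
    rwa [hpre] at this
  rw [← hmp.lintegral_comp measF]
  apply lintegral_congr
  intro s
  simp [abs_neg]

lemma oneDim {β : ℝ} (hβ0 : 0 < β) (hβ1 : β < 1) (a b c : ℝ) :
    ∫⁻ t in Icc a b, ENNReal.ofReal (Real.exp (-β * Real.log |t - c|))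
      ≤ ENNReal.ofReal (b - a) + ENNReal.ofReal (2 / (1 - β)) := by
  set F : ℝ → ℝ≥0∞ := fun s => ENNReal.ofReal (Real.exp (-β * Real.log |s|)) with hF
  set h : ℝ → ℝ≥0∞ := fun s => (Icc (-1:ℝ) 1).indicator F s with hh
  have hpt : ∀ t : ℝ, F (t - c) ≤ 1 + h (t - c) := by
    intro t
    by_cases hle : |t - c| ≤ 1
    · have : t - c ∈ Icc (-1:ℝ) 1 := by
        rw [mem_Icc]; constructor <;> [linarith [abs_le.1 hle]; exact (abs_le.1 hle).2]
      rw [hh]; simp only [indicator_of_mem this]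
      exact le_add_self
    · push_neg at hle
      have hlog : 0 ≤ Real.log |t - c| := Real.log_nonneg hle.le
      have : Real.exp (-β * Real.log |t - c|) ≤ 1 := by
        rw [← Real.exp_zero]
        apply Real.exp_le_exp.2
        nlinarith
      calc F (t - c) ≤ 1 := by
            rw [hF]; simpa using ENNReal.ofReal_le_ofReal this
        _ ≤ 1 + h (t - c) := le_self_add
  have hhmeas : Measurable h := measF.indicator measurableSet_Icc
  calc ∫⁻ t in Icc a b, F (t - c)
      ≤ ∫⁻ t in Icc a b, (1 + h (t - c)) := lintegral_mono fun t => hpt t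
    _ = (volume.restrict (Icc a b)) univ + ∫⁻ t in Icc a b, h (t - c) := by
        rw [lintegral_add_left measurable_const]; simp
    _ ≤ ENNReal.ofReal (b - a) + ∫⁻ t, h (t - c) := by
        gcongr
        · rw [Measure.restrict_apply_univ, Real.volume_Icc]
        · exact Measure.restrict_le_self
    _ = ENNReal.ofReal (b - a) + ∫⁻ t, h t := by
        rw [lintegral_sub_right_eq_self (fun s => h s) c]
    _ = ENNReal.ofReal (b - a) + ∫⁻ t in Icc (-1:ℝ) 1, F t := by
        congr 1
        simp only [hh]
        exact lintegral_indicator measurableSet_Icc F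
    _ ≤ ENNReal.ofReal (b - a) + ENNReal.ofReal (2 / (1 - β)) := by
        gcongr
        calc ∫⁻ t in Icc (-1:ℝ) 1, F t
            = ∫⁻ t in Icc (-1:ℝ) 0 ∪ Icc (0:ℝ) 1, F t := by
              rw [Set.Icc_union_Icc_eq_Icc (by norm_num : (-1:ℝ) ≤ 0) (by norm_num : (0:ℝ) ≤ 1)]
          _ ≤ (∫⁻ t in Icc (-1:ℝ) 0, F t) + ∫⁻ t in Icc (0:ℝ) 1, F t :=
              lintegral_union_le _ _ _
          _ ≤ ENNReal.ofReal (1/(1-β)) + ENNReal.ofReal (1/(1-β)) := by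
              rw [reflInt]
              exact add_le_add (halfInt hβ0 hβ1) (halfInt hβ0 hβ1)
          _ = ENNReal.ofReal (2 / (1 - β)) := by
              rw [← ENNReal.ofReal_add (by simp; linarith) (by simp; linarith)]
              congr 1
              ring

lemma arcBound {L a b : ℝ} (hL : 0 ≤ L) {y : ℝ → ℝ}
    (hy : LipschitzOnWith L.toNNReal y (Set.Icc a b)) {t : ℝ} (ht : t ∈ Ioo a b) :
    arcElt y t ≤ Real.sqrt (1 + L ^ 2) := by
  have hd : |deriv y t| ≤ L := by
    by_cases hdiff : DifferentiableAt ℝ y t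
    · have hslope : Tendsto (slope y t) (𝓝[≠] t) (𝓝 (deriv y t)) :=
        hasDerivAt_iff_tendsto_slope.1 hdiff.hasDerivAt
      have habs : Tendsto (fun s => |slope y t s|) (𝓝[≠] t) (𝓝 |deriv y t|) :=
        hslope.abs
      refine le_of_tendsto habs ?_
      have hIoo : Ioo a b ∈ 𝓝[≠] t :=
        nhdsWithin_le_nhds (isOpen_Ioo.mem_nhds ht)
      filter_upwards [hIoo, self_mem_nhdsWithin] with s hs hst
      have hst' : s ≠ t := hst
      have hlip : dist (y s) (y t) ≤ L * dist s t := by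
        have := hy.dist_le_mul s (Ioo_subset_Icc_self hs) t (Ioo_subset_Icc_self ht)
        rwa [Real.coe_toNNReal L hL] at this
      have hnum : |y s - y t| ≤ L * |s - t| := by
        simpa [Real.dist_eq] using hlip
      rw [slope_def_field, abs_div, div_le_iff₀ (abs_pos.2 (sub_ne_zero.2 hst'))]
      exact hnum
    · rw [deriv_zero_of_not_differentiableAt hdiff]
      simpa using hL
  rw [arcElt]
  apply Real.sqrt_le_sqrt
  nlinarith [abs_nonneg (deriv y t), sq_abs (deriv y t)]

/-- Let `γ` be a Lipschitz graph over `[a,b]`, `μ` a nonnegative measure of total mass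
`β < 1` supported on an open set `U` containing `γ`, and
`φ(z) = ∫ log|z - ζ| dμ(ζ)` its logarithmic potential. Then `∫_γ e^{-φ} ds ≤ C` for a
constant `C > 0` depending only on `L, β, a, b`. -/
theorem potential_exp_integral_bound
    (L a b β : ℝ) (hab : a ≤ b) (hL : 0 ≤ L) (hβ0 : 0 ≤ β) (hβ1 : β < 1) :
    ∃ C : ℝ, 0 < C ∧
      ∀ (y : ℝ → ℝ), LipschitzOnWith L.toNNReal y (Set.Icc a b) →
      ∀ (U : Set ℂ), IsOpen U → graphPt y '' Set.Icc a b ⊆ U →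
      ∀ (μ : Measure ℂ), μ Set.univ = ENNReal.ofReal β → μ Uᶜ = 0 →
      ∀ φ : ℂ → ℝ, (∀ z, φ z = ∫ ζ, Real.log ‖z - ζ‖ ∂μ) →
        (∫⁻ t in Set.Icc a b,
            ENNReal.ofReal (Real.exp (-φ (graphPt y t)) * arcElt y t))
          ≤ ENNReal.ofReal C := by
  have h1β : (0:ℝ) < 1 - β := by linarith
  set M := Real.sqrt (1 + L ^ 2) with hM
  have hM0 : 0 ≤ M := Real.sqrt_nonneg _
  have hM1 : (1:ℝ) ≤ M := by
    calc (1:ℝ) = Real.sqrt 1 := Real.sqrt_one.symm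
      _ ≤ M := Real.sqrt_le_sqrt (by nlinarith)
  have hfac : (0:ℝ) < 2*(b-a) + 2/(1-β) := by
    have : (0:ℝ) < 2/(1-β) := by positivity
    nlinarith
  refine ⟨M * (2*(b-a) + 2/(1-β)), by nlinarith, ?_⟩
  intro y hy U hU hγU μ hμu hμU φ hφ
  -- the key bound on the exponential factor
  have hE : ∫⁻ t in Icc a b, ENNReal.ofReal (Real.exp (-φ (graphPt y t)))
      ≤ ENNReal.ofReal (2*(b-a) + 2/(1-β)) := by
    rcases eq_or_lt_of_le hβ0 with hβz | hβpos
    · -- β = 0 : μ = 0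
      have hμ0 : μ = 0 := by
        apply Measure.measure_univ_eq_zero.mp
        rw [hμu, ← hβz]
        simp
      have hφ0 : ∀ z, φ z = 0 := fun z => by rw [hφ z, hμ0, integral_zero_measure]
      simp only [hφ0, neg_zero, Real.exp_zero, ENNReal.ofReal_one]
      rw [lintegral_one, Measure.restrict_apply_univ, Real.volume_Icc]
      apply ENNReal.ofReal_le_ofReal
      have : (0:ℝ) ≤ 2/(1-β) := by positivity
      linarith
    · -- β > 0
      set c : ℝ≥0∞ := ENNReal.ofReal β with hc
      have hc0 : c ≠ 0 := by simp [hc, ENNReal.ofReal_eq_zero]; linarith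
      have hcT : c ≠ ⊤ := ENNReal.ofReal_ne_top
      set ν : Measure ℂ := c⁻¹ • μ with hν
      have hμν : μ = c • ν := by
        rw [hν, smul_smul, ENNReal.mul_inv_cancel hc0 hcT, one_smul]
      haveI hprob : IsProbabilityMeasure ν :=
        ⟨by rw [hν, Measure.smul_apply, hμu, smul_eq_mul,
          ENNReal.inv_mul_cancel hc0 hcT]⟩
      -- pointwise Jensen bound
      have hpt : ∀ z : ℂ, ENNReal.ofReal (Real.exp (-φ z))
          ≤ 1 + ∫⁻ ζ, ENNReal.ofReal (Real.exp (-β * Real.log (‖z - ζ‖))) ∂ν := by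
        intro z
        by_cases hi : Integrable (fun ζ => Real.log (‖z - ζ‖)) μ
        · have hiν : Integrable (fun ζ => Real.log (‖z - ζ‖)) ν := by
            rw [hν]
            exact hi.smul_measure (ENNReal.inv_ne_top.2 hc0)
          have hφz : -φ z = ∫ ζ, -β * Real.log (‖z - ζ‖) ∂ν := by
            rw [hφ z, hμν, integral_smul_measure, hc, ENNReal.toReal_ofReal hβ0,
              integral_const_mul, smul_eq_mul]
            ring
          rw [hφz]
          exact le_trans (expJensen (hiν.const_mul (-β))) le_add_self
        · rw [hφ z, integral_undef hi]
          simpa using le_self_add (a := (1:ℝ≥0∞))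
      -- measurability for Fubini
      have hyae : AEMeasurable y (volume.restrict (Icc a b)) :=
        (hy.continuousOn).aemeasurable measurableSet_Icc
      have hγae : AEMeasurable (graphPt y) (volume.restrict (Icc a b)) := by
        have hrw : graphPt y = fun t : ℝ => (t : ℂ) + (y t : ℂ) * Complex.I := rfl
        rw [hrw]
        exact (Complex.measurable_ofReal.aemeasurable).add
          ((Complex.measurable_ofReal.comp_aemeasurable hyae).mul_const Complex.I)
      have hFae : AEMeasurable
          (Function.uncurry fun (t : ℝ) (ζ : ℂ) =>
            ENNReal.ofReal (Real.exp (-β * Real.log (‖graphPt y t - ζ‖))))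
          ((volume.restrict (Icc a b)).prod ν) := by
        apply ENNReal.measurable_ofReal.comp_aemeasurable
        apply Real.measurable_exp.comp_aemeasurable
        apply AEMeasurable.const_mul
        apply Real.measurable_log.comp_aemeasurable
        apply continuous_norm.measurable.comp_aemeasurable
        exact hγae.comp_fst.sub (measurable_snd.aemeasurable)
      calc ∫⁻ t in Icc a b, ENNReal.ofReal (Real.exp (-φ (graphPt y t)))
          ≤ ∫⁻ t in Icc a b, (1 + ∫⁻ ζ, ENNReal.ofReal
              (Real.exp (-β * Real.log (‖graphPt y t - ζ‖))) ∂ν) := by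
            apply lintegral_mono
            intro t
            exact hpt (graphPt y t)
        _ = (volume.restrict (Icc a b)) univ + ∫⁻ t in Icc a b, ∫⁻ ζ, ENNReal.ofReal
              (Real.exp (-β * Real.log (‖graphPt y t - ζ‖))) ∂ν := by
            rw [lintegral_add_left measurable_const]; simp
        _ ≤ ENNReal.ofReal (b - a) +
              (ENNReal.ofReal (b - a) + ENNReal.ofReal (2/(1-β))) := by
            gcongr
            · rw [Measure.restrict_apply_univ, Real.volume_Icc]
            · rw [lintegral_lintegral_swap hFae]
              calc ∫⁻ ζ, (∫⁻ t in Icc a b, ENNReal.ofReal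
                    (Real.exp (-β * Real.log (‖graphPt y t - ζ‖)))) ∂ν
                  ≤ ∫⁻ _ζ, (ENNReal.ofReal (b - a) + ENNReal.ofReal (2/(1-β))) ∂ν := by
                    apply lintegral_mono_ae
                    apply Eventually.of_forall
                    intro ζ
                    have hinner : ∫⁻ t in Icc a b, ENNReal.ofReal
                        (Real.exp (-β * Real.log (‖graphPt y t - ζ‖)))
                        ≤ ∫⁻ t in Icc a b, ENNReal.ofReal
                        (Real.exp (-β * Real.log |t - ζ.re|)) := by
                      apply lintegral_mono_ae
                      have hne : ∀ᵐ t ∂(volume.restrict (Icc a b)), t ≠ ζ.re := by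
                        apply ae_restrict_of_ae
                        have h0 : (volume : Measure ℝ) {ζ.re} = 0 := Real.volume_singleton
                        filter_upwards [measure_eq_zero_iff_ae_notMem.mp h0] with t htn
                        simpa using htn
                      filter_upwards [hne] with t htne
                      have hre : ((graphPt y t) - ζ).re = t - ζ.re := by simp [graphPt]
                      have habs : |t - ζ.re| ≤ ‖graphPt y t - ζ‖ := by
                        rw [← hre]; exact Complex.abs_re_le_norm _
                      have hpos : 0 < |t - ζ.re| := abs_pos.2 (sub_ne_zero.2 htne)
                      apply ENNReal.ofReal_le_ofReal
                      apply Real.exp_le_exp.2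
                      have hll : Real.log |t - ζ.re| ≤
                          Real.log (‖graphPt y t - ζ‖) :=
                        Real.log_le_log hpos habs
                      nlinarith
                    exact le_trans hinner (oneDim hβpos hβ1 a b ζ.re)
                _ = ENNReal.ofReal (b - a) + ENNReal.ofReal (2/(1-β)) := by
                    rw [lintegral_const, measure_univ, mul_one]
        _ = ENNReal.ofReal (2*(b-a) + 2/(1-β)) := by
            have h2 : (0:ℝ) ≤ 2/(1-β) := div_nonneg (by norm_num) h1β.le
            rw [← ENNReal.ofReal_add (by linarith) h2,
              ← ENNReal.ofReal_add (by linarith) (by linarith)]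
            congr 1
            ring
  -- a.e. bound on the arc element
  have hae : ∀ᵐ t ∂(volume.restrict (Icc a b)),
      ENNReal.ofReal (Real.exp (-φ (graphPt y t)) * arcElt y t)
        ≤ ENNReal.ofReal M * ENNReal.ofReal (Real.exp (-φ (graphPt y t))) := by
    have hIoo : ∀ᵐ t ∂(volume.restrict (Icc a b)), t ∈ Ioo a b := by
      rw [ae_iff]
      rw [Measure.restrict_apply₀]
      · have hsub : {t : ℝ | ¬ t ∈ Ioo a b} ∩ Icc a b ⊆ ({a, b} : Set ℝ) := by
          intro t ht
          simp only [mem_inter_iff, mem_setOf_eq, mem_Ioo, mem_Icc] at ht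
          rcases ht with ⟨hnot, hta, htb⟩
          push_neg at hnot
          rcases lt_or_eq_of_le hta with h | h
          · right; simp only [mem_singleton_iff]; linarith [hnot h]
          · left; exact h.symm
        exact measure_mono_null hsub (((Set.finite_singleton b).insert a).measure_zero volume)
      · exact (measurableSet_Ioo.compl).nullMeasurableSet
    filter_upwards [hIoo] with t htI
    have harc : arcElt y t ≤ M := arcBound hL hy htI
    rw [← ENNReal.ofReal_mul hM0]
    apply ENNReal.ofReal_le_ofReal
    calc Real.exp (-φ (graphPt y t)) * arcElt y t
        ≤ Real.exp (-φ (graphPt y t)) * M :=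
          mul_le_mul_of_nonneg_left harc (Real.exp_pos _).le
      _ = M * Real.exp (-φ (graphPt y t)) := by ring
  calc ∫⁻ t in Icc a b, ENNReal.ofReal (Real.exp (-φ (graphPt y t)) * arcElt y t)
      ≤ ∫⁻ t in Icc a b, ENNReal.ofReal M *
          ENNReal.ofReal (Real.exp (-φ (graphPt y t))) := lintegral_mono_ae hae
    _ = ENNReal.ofReal M *
          ∫⁻ t in Icc a b, ENNReal.ofReal (Real.exp (-φ (graphPt y t))) :=
        lintegral_const_mul' _ _ ENNReal.ofReal_ne_top
    _ ≤ ENNReal.ofReal M * ENNReal.ofReal (2*(b-a) + 2/(1-β)) := by gcongr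
    _ = ENNReal.ofReal (M * (2*(b-a) + 2/(1-β))) := (ENNReal.ofReal_mul hM0).symm
end

section
/- Let Ω ⊂ ℂ be a Carathéodory domain and φ a subharmonic function on ℂ. Suppose P is a polynomial with ∫_Ω |P|² e^{-φ} dλ < ∞. Let p ∈ ∂Ω and suppose there is an open disc Δ contained in the complement of Ω with p ∈ ∂Δ. Then for every ε > 0 there exists a function P̃, holomorphic on a neighborhood of the closure of Ω, with P̃(p) = 0 and ∫_Ω |P̃ − P|² e^{-φ} dλ < ε. -/
open MeasureTheory Set Metric Complex Filter
open scoped ENNReal Topology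

/-- A real-valued function is *subharmonic* on an open set `U ⊆ ℂ` if it is upper
semicontinuous on `U` and satisfies the sub-mean value inequality on every closed disc
contained in `U`. -/
def SubharmonicOn (φ : ℂ → ℝ) (U : Set ℂ) : Prop :=
  UpperSemicontinuousOn φ U ∧
    ∀ z ∈ U, ∀ r : ℝ, 0 < r → Metric.closedBall z r ⊆ U →
      φ z ≤ (1 / (2 * Real.pi)) *
        ∫ θ in (0 : ℝ)..(2 * Real.pi), φ (z + (r : ℂ) * Complex.exp ((θ : ℂ) * Complex.I))

/-- A *Carathéodory domain*: a bounded simply-connected planar domain whose boundary is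
also the boundary of an unbounded domain. -/
def CaratheodoryDomain (Ω : Set ℂ) : Prop :=
  IsOpen Ω ∧ IsConnected Ω ∧ Bornology.IsBounded Ω ∧ SimplyConnectedSpace ↥Ω ∧
    ∃ V : Set ℂ, IsOpen V ∧ IsConnected V ∧ ¬Bornology.IsBounded V ∧ frontier Ω = frontier V

/-- The weighted squared `L²` norm `∫_Ω |f|² e^{-φ} dλ` with respect to planar
Lebesgue measure. -/
noncomputable def wArea (Ω : Set ℂ) (φ : ℂ → ℝ) (f : ℂ → ℂ) : ℝ≥0∞ :=
  ∫⁻ z in Ω, ENNReal.ofReal (‖f z‖ ^ 2 * Real.exp (-φ z))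

/-- Let `Ω` be a Carathéodory domain, `φ` subharmonic on `ℂ`, and `P` a polynomial with
`∫_Ω |P|² e^{-φ} dλ < ∞`. If `p ∈ ∂Ω` and there is an open disc `Δ ⊆ Ωᶜ` with
`p ∈ ∂Δ`, then `P` can be approximated in `L²(Ω, φ)` by functions holomorphic on a
neighborhood of the closure of `Ω` vanishing at `p`. -/
theorem approximate_by_holomorphic_vanishing_at_peak_point
    (Ω : Set ℂ) (hΩ : CaratheodoryDomain Ω)
    (φ : ℂ → ℝ) (hφ : SubharmonicOn φ Set.univ)
    (P : Polynomial ℂ) (hP : wArea Ω φ (fun z => P.eval z) < ⊤)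
    (p : ℂ) (hp : p ∈ frontier Ω)
    (q : ℂ) (r : ℝ) (hr : 0 < r) (hΔ : Metric.ball q r ⊆ Ωᶜ)
    (hpΔ : p ∈ frontier (Metric.ball q r)) :
    ∀ ε : ℝ, 0 < ε → ∃ (W : Set ℂ) (Pt : ℂ → ℂ),
      IsOpen W ∧ closure Ω ⊆ W ∧ DifferentiableOn ℂ Pt W ∧ Pt p = 0 ∧
      wArea Ω φ (fun z => Pt z - P.eval z) < ENNReal.ofReal ε := by
  intro ε hε
  obtain ⟨hΩopen, -⟩ := hΩ
  -- |p - q| = r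
  have hpq : ‖p - q‖ = r := by
    rw [frontier_ball q hr.ne'] at hpΔ
    simpa [Complex.dist_eq] using hpΔ
  have hpq0 : p - q ≠ 0 := by
    intro h
    rw [h, norm_zero] at hpq
    exact absurd hpq.symm hr.ne'
  -- Ω avoids the closed ball
  have hΩsub : Ω ⊆ (Metric.closedBall q r)ᶜ := by
    have h1 : Ω ⊆ (Metric.ball q r)ᶜ := fun z hz hzb => hΔ hzb hz
    have h2 := interior_maximal h1 hΩopen
    rwa [interior_compl, closure_ball q hr.ne'] at h2
  have habs : ∀ z ∈ Ω, r < ‖z - q‖ := by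
    intro z hz
    have h := hΩsub hz
    simpa [Metric.mem_closedBall, Complex.dist_eq, not_le] using h
  have habs0 : ∀ z ∈ Ω, z - q ≠ 0 := by
    intro z hz h
    have := habs z hz
    rw [h, norm_zero] at this
    linarith
  -- measurability of φ
  have hφm : Measurable φ := by
    have : UpperSemicontinuous φ := upperSemicontinuousOn_univ_iff.mp hφ.1
    exact this.measurable
  -- the family of correction functions
  set t : ℂ → ℂ := fun z => (p - q) / (z - q) with ht
  set F : ℕ → ℂ → ℝ≥0∞ := fun n z =>
    ENNReal.ofReal (‖P.eval z * t z ^ n‖ ^ 2 * Real.exp (-φ z)) with hF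
  have hFmeas : ∀ n, Measurable (F n) := by
    intro n
    apply Measurable.ennreal_ofReal
    apply Measurable.mul
    · apply Measurable.pow_const
      apply continuous_norm.measurable.comp
      apply Measurable.mul
      · exact (Polynomial.continuous P).measurable
      · exact (measurable_const.div (measurable_id.sub measurable_const)).pow_const n
    · exact (Real.continuous_exp.measurable).comp hφm.neg
  have hbound : ∀ n, F n ≤ᵐ[volume.restrict Ω]
      fun z => ENNReal.ofReal (‖P.eval z‖ ^ 2 * Real.exp (-φ z)) := by
    intro n
    rw [Filter.EventuallyLE, ae_restrict_iff' hΩopen.measurableSet]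
    refine ae_of_all _ fun z hz => ?_
    have hc : ‖t z‖ ≤ 1 := by
      rw [ht, norm_div, hpq]
      have := habs z hz
      rw [div_le_one (by linarith)]
      linarith
    apply ENNReal.ofReal_le_ofReal
    apply mul_le_mul_of_nonneg_right _ (Real.exp_pos _).le
    rw [norm_mul, norm_pow]
    have h1 : ‖t z‖ ^ n ≤ 1 := pow_le_one₀ (norm_nonneg _) hc
    calc (‖P.eval z‖ * ‖t z‖ ^ n) ^ 2
        ≤ (‖P.eval z‖ * 1) ^ 2 := by
          apply pow_le_pow_left₀ (by positivity)
          exact mul_le_mul_of_nonneg_left h1 (norm_nonneg _)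
      _ = ‖P.eval z‖ ^ 2 := by ring
  have hlim : ∀ᵐ z ∂(volume.restrict Ω), Tendsto (fun n => F n z) atTop (𝓝 0) := by
    rw [ae_restrict_iff' hΩopen.measurableSet]
    refine ae_of_all _ fun z hz => ?_
    have hc : ‖t z‖ < 1 := by
      rw [ht, norm_div, hpq]
      have := habs z hz
      rw [div_lt_one (by linarith)]
      exact this
    have hkey : ∀ n, ‖P.eval z * t z ^ n‖ ^ 2 * Real.exp (-φ z) =
        (‖P.eval z‖ ^ 2 * Real.exp (-φ z)) * (‖t z‖ ^ 2) ^ n := by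
      intro n
      rw [norm_mul, norm_pow]
      ring
    have h1 : Tendsto (fun n : ℕ => (‖t z‖ ^ 2) ^ n) atTop (𝓝 0) :=
      tendsto_pow_atTop_nhds_zero_of_lt_one (by positivity)
        (by nlinarith [norm_nonneg (t z)])
    have h2 : Tendsto (fun n : ℕ =>
        (‖P.eval z‖ ^ 2 * Real.exp (-φ z)) * (‖t z‖ ^ 2) ^ n)
        atTop (𝓝 0) := by
      simpa using h1.const_mul (‖P.eval z‖ ^ 2 * Real.exp (-φ z))
    have h3 : Tendsto (fun n => F n z) atTop (𝓝 (ENNReal.ofReal 0)) := by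
      apply ENNReal.tendsto_ofReal
      simp only [hkey]
      exact h2
    simpa using h3
  have hdom : Tendsto (fun n => ∫⁻ z in Ω, F n z) atTop (𝓝 (∫⁻ _ in Ω, (0 : ℝ≥0∞))) := by
    refine tendsto_lintegral_of_dominated_convergence _ hFmeas hbound ?_ hlim
    exact hP.ne
  rw [lintegral_zero] at hdom
  have hev : ∀ᶠ n in atTop, (∫⁻ z in Ω, F n z) < ENNReal.ofReal ε :=
    hdom.eventually (gt_mem_nhds (ENNReal.ofReal_pos.2 hε))
  obtain ⟨n, hn⟩ := hev.exists
  refine ⟨(Metric.closedBall q (r / 2))ᶜ, fun z => P.eval z - P.eval z * t z ^ n,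
    Metric.isClosed_closedBall.isOpen_compl, ?_, ?_, ?_, ?_⟩
  · -- closure Ω ⊆ W
    have h1 : Ω ⊆ (Metric.ball q r)ᶜ := fun z hz hzb => hΔ hzb hz
    have h2 : closure Ω ⊆ (Metric.ball q r)ᶜ :=
      closure_minimal h1 (Metric.isOpen_ball.isClosed_compl)
    refine h2.trans (compl_subset_compl.2 ?_)
    exact Metric.closedBall_subset_ball (by linarith)
  · -- differentiable on W
    have hW0 : ∀ z ∈ (Metric.closedBall q (r / 2))ᶜ, z - q ≠ 0 := by
      intro z hz h
      apply hz
      have : z = q := by rwa [sub_eq_zero] at h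
      simp [this, Metric.mem_closedBall]
      linarith
    apply DifferentiableOn.sub (P.differentiable.differentiableOn)
    apply DifferentiableOn.mul (P.differentiable.differentiableOn)
    apply DifferentiableOn.pow
    exact DifferentiableOn.div (differentiableOn_const _)
      ((differentiable_id.sub_const q).differentiableOn) hW0
  · -- vanishes at p
    simp [ht, div_self hpq0]
  · -- small weighted norm
    have heq : wArea Ω φ (fun z => (P.eval z - P.eval z * t z ^ n) - P.eval z)
        = ∫⁻ z in Ω, F n z := by
      unfold wArea
      apply lintegral_congr
      intro z
      have : (P.eval z - P.eval z * t z ^ n) - P.eval z = -(P.eval z * t z ^ n) := by ring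
      simp only [this, norm_neg, hF]
    rw [heq]
    exact hn
end
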